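/- Let γ = π/2, so that E is the open unit disk, and let q be the Markov kernel on (−1,1) given by: q(x,·) = Lebesgue measure restricted to (0,1) if x ∈ (−1,0); q(x,·) = Lebesgue measure restricted to (−1,0) if x ∈ (0,1); and q(0,·) = m¹. Then m¹ is a reversible and ergodic measure for q, and yet m² is not ergodic for Q: for each of the four open coordinate quadrants Qd_i of ℝ², the set (E ∩ Qd_i) × {−1,1} is (m²,Q)-invariant and has m²-measure 1/4. -/

import Mathlib

open MeasureTheory ProbabilityTheory Set Pointwise
open scoped ENNReal

noncomputable section

/-- The increasing affine map from `(-1,1)` onto the chord `E_u`. -/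
def ellMap (γ u x : ℝ) : ℝ := -u * Real.cos γ + x * Real.sqrt (1 - u ^ 2 * Real.sin γ ^ 2)

/-- The inverse of `ellMap γ u`. -/
def ellInv (γ u y : ℝ) : ℝ := (y + u * Real.cos γ) / Real.sqrt (1 - u ^ 2 * Real.sin γ ^ 2)

/-- The open elliptical region `E`. -/
def Eset (γ : ℝ) : Set (ℝ × ℝ) :=
  {p | p.1 ^ 2 + 2 * Real.cos γ * p.1 * p.2 + p.2 ^ 2 < 1}

/-- The state space `E* = E × {−1,1}`, realized inside `ℝ × ℝ × ℝ`. -/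
def EstarSet (γ : ℝ) : Set (ℝ × ℝ × ℝ) :=
  {w | (w.1, w.2.1) ∈ Eset γ ∧ (w.2.2 = 1 ∨ w.2.2 = -1)}

/-- Uniform probability measure on `(-1,1)`. -/
def m1 : Measure ℝ := (2 : ℝ≥0∞)⁻¹ • volume.restrict (Ioo (-1 : ℝ) 1)

/-- The probability measure `m²` on `E*`: normalized Lebesgue measure on `E` times
uniform measure on `{−1,1}`. -/
def m2 (γ : ℝ) : Measure (ℝ × ℝ × ℝ) :=
  ((((volume (Eset γ))⁻¹ • volume.restrict (Eset γ)).prod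
      ((2 : ℝ≥0∞)⁻¹ • (Measure.dirac (1 : ℝ) + Measure.dirac (-1 : ℝ)))).map
    fun p => (p.1.1, p.1.2, p.2))

/-- `q` is a Markov kernel on `(-1,1)`. -/
def IsMarkovOnInterval (q : Kernel ℝ ℝ) : Prop :=
  IsMarkovKernel q ∧ ∀ x ∈ Ioo (-1 : ℝ) 1, q x (Ioo (-1 : ℝ) 1) = 1

/-- The kernel `Q` of the alternating random walk, as a measure-valued function on the
state space. -/
def Qfun (γ : ℝ) (q : Kernel ℝ ℝ) : ℝ × ℝ × ℝ → Measure (ℝ × ℝ × ℝ) := fun w =>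
  if w.2.2 = -1 then
    Measure.map (fun x => (ellMap γ w.2.1 x, w.2.1, (1 : ℝ))) (q (-ellInv γ w.2.1 w.1))
  else
    Measure.map (fun x => (w.1, ellMap γ w.1 x, (-1 : ℝ))) (q (-ellInv γ w.1 w.2.1))

/-- The kernel `Q†`. -/
def Qdag (γ : ℝ) (q : Kernel ℝ ℝ) : ℝ × ℝ × ℝ → Measure (ℝ × ℝ × ℝ) := fun w =>
  if w.2.2 = 1 then
    Measure.map (fun x => (ellMap γ w.2.1 x, w.2.1, (-1 : ℝ)))
      ((q (ellInv γ w.2.1 w.1)).map (fun y => -y))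
  else
    Measure.map (fun x => (w.1, ellMap γ w.1 x, (1 : ℝ)))
      ((q (ellInv γ w.1 w.2.1)).map (fun y => -y))

/-- Bounded continuous real-valued functions on a subset `S`. -/
def BddCtsOn {X : Type*} [TopologicalSpace X] (S : Set X) (f : X → ℝ) : Prop :=
  ContinuousOn f S ∧ ∃ C, ∀ x ∈ S, |f x| ≤ C

/-- `m¹` is a reversible measure for `q`. -/
def Reversible1 (q : Kernel ℝ ℝ) : Prop :=
  ∀ j k : ℝ → ℝ, BddCtsOn (Ioo (-1 : ℝ) 1) j → BddCtsOn (Ioo (-1 : ℝ) 1) k →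
    ∫ x, k x * ∫ y, j y ∂(q x) ∂m1 = ∫ x, j x * ∫ y, k y ∂(q x) ∂m1

/-- The `†`-operation on measure-valued functions on `(-1,1)`: `p†(x,A) := p(−x,−A)`. -/
def dag (p : ℝ → Measure ℝ) : ℝ → Measure ℝ := fun x => (p (-x)).map (fun y => -y)

/-- `m¹` is a `†`-reversible measure for `p`. -/
def DagReversible1 (p : ℝ → Measure ℝ) : Prop :=
  ∀ j k : ℝ → ℝ, BddCtsOn (Ioo (-1 : ℝ) 1) j → BddCtsOn (Ioo (-1 : ℝ) 1) k →
    ∫ x, k x * ∫ y, j y ∂(p x) ∂m1 = ∫ x, j x * ∫ y, k y ∂(dag p x) ∂m1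

/-- `m²` is a `†`-reversible measure for `Q`. -/
def DagReversible2 (γ : ℝ) (q : Kernel ℝ ℝ) : Prop :=
  ∀ f g : ℝ × ℝ × ℝ → ℝ, BddCtsOn (EstarSet γ) f → BddCtsOn (EstarSet γ) g →
    ∫ w, g w * ∫ w', f w' ∂(Qfun γ q w) ∂(m2 γ) =
      ∫ w, f w * ∫ w', g w' ∂(Qdag γ q w) ∂(m2 γ)

/-- `μ` is an invariant measure for the transition function `p`. -/
def KInvariantMeasure {S : Type*} [MeasurableSpace S] (μ : Measure S) (p : S → Measure S) :
    Prop :=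
  ∀ A : Set S, MeasurableSet A → ∫⁻ x, p x A ∂μ = μ A

/-- The set `A` is `(μ,p)`-invariant. -/
def KInvariantSet {S : Type*} [MeasurableSpace S] (μ : Measure S) (p : S → Measure S)
    (A : Set S) : Prop :=
  ∀ᵐ x ∂μ, x ∈ A → p x A = 1

/-- `μ` is an ergodic measure for the transition function `p`. -/
def KErgodicMeasure {S : Type*} [MeasurableSpace S] (μ : Measure S) (p : S → Measure S) :
    Prop :=
  KInvariantMeasure μ p ∧
    ∀ A : Set S, MeasurableSet A → KInvariantSet μ p A → μ A = 0 ∨ μ A = 1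

/-- The set `A` is `(μ,p)`-ergodic. -/
def KErgodicSet {S : Type*} [MeasurableSpace S] (μ : Measure S) (p : S → Measure S)
    (A : Set S) : Prop :=
  MeasurableSet A ∧ KInvariantSet μ p A ∧
    ∀ B : Set S, B ⊆ A → MeasurableSet B → KInvariantSet μ p B → μ B = 0 ∨ μ B = μ A

/-- `F⁺`: the slice of `F ⊆ E*` at `s = 1`. -/
def Fplus (F : Set (ℝ × ℝ × ℝ)) : Set (ℝ × ℝ) := {p | (p.1, p.2, (1 : ℝ)) ∈ F}

/-- `F⁻`: the slice of `F ⊆ E*` at `s = −1`. -/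
def Fminus (F : Set (ℝ × ℝ × ℝ)) : Set (ℝ × ℝ) := {p | (p.1, p.2, (-1 : ℝ)) ∈ F}

/-- `[G]^u ⊆ (−1,1)`. -/
def brU (γ : ℝ) (G : Set (ℝ × ℝ)) (u : ℝ) : Set ℝ :=
  {x | x ∈ Ioo (-1 : ℝ) 1 ∧ (u, ellMap γ u x) ∈ G}

/-- `[G]_v ⊆ (−1,1)`. -/
def brV (γ : ℝ) (G : Set (ℝ × ℝ)) (v : ℝ) : Set ℝ :=
  {x | x ∈ Ioo (-1 : ℝ) 1 ∧ (ellMap γ v x, v) ∈ G}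

/-- The map `T₀` on `E*`. -/
def T0 (γ : ℝ) (w : ℝ × ℝ × ℝ) : ℝ × ℝ × ℝ :=
  (-w.1 - 2 * w.2.1 * Real.cos γ, w.2.1, -w.2.2)

/-- The map `T₁` on `E*`. -/
def T1 (γ : ℝ) (w : ℝ × ℝ × ℝ) : ℝ × ℝ × ℝ :=
  (w.1, -w.2.1 - 2 * w.1 * Real.cos γ, -w.2.2)

/-- The linear map `U_γ` taking `E` to the unit disk. -/
def Ugamma (γ : ℝ) (p : ℝ × ℝ) : ℝ × ℝ := (p.1 + p.2 * Real.cos γ, p.2 * Real.sin γ)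

/-- `V(u,v,s) = s·|U_γ(u,v)|²`. -/
def Vfun (γ : ℝ) (w : ℝ × ℝ × ℝ) : ℝ :=
  w.2.2 * ((w.1 + w.2.1 * Real.cos γ) ^ 2 + (w.2.1 * Real.sin γ) ^ 2)

/-! ### Auxiliary lemmas -/

section Aux

lemma restrict_split : (volume : Measure ℝ).restrict (Ioo (-1 : ℝ) 1)
    = volume.restrict (Ioo (-1 : ℝ) 0) + volume.restrict (Ioo (0 : ℝ) 1) := by
  have hae : Ioo (-1 : ℝ) 1 =ᵐ[volume] ((Ioo (-1 : ℝ) 0 ∪ Ioo (0 : ℝ) 1 : Set ℝ)) := by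
    rw [MeasureTheory.ae_eq_set]
    constructor
    · refine measure_mono_null (fun x hx => ?_) (measure_singleton (0 : ℝ))
      obtain ⟨⟨h1, h2⟩, h3⟩ := hx
      simp only [mem_union, mem_Ioo, not_or, not_and_or, not_lt] at h3
      simp only [mem_singleton_iff]
      rcases h3 with ⟨h4, h5⟩
      rcases h4 with h4 | h4
      · linarith
      · rcases h5 with h5 | h5 <;> linarith
    · refine measure_mono_null (fun x hx => ?_) (measure_empty (μ := volume) (α := ℝ))
      obtain ⟨h1, h2⟩ := hx
      exfalso
      rcases h1 with ⟨h3, h4⟩ | ⟨h3, h4⟩ <;> exact h2 ⟨by linarith, by linarith⟩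
  rw [Measure.restrict_congr_set hae,
    Measure.restrict_union (by rw [Set.disjoint_left]; rintro x ⟨_, h⟩ ⟨h', _⟩; linarith)
      measurableSet_Ioo]

lemma m1_apply {A : Set ℝ} (hA : MeasurableSet A) :
    m1 A = 2⁻¹ * (volume (A ∩ Ioo (-1 : ℝ) 0) + volume (A ∩ Ioo (0 : ℝ) 1)) := by
  rw [m1, Measure.smul_apply, smul_eq_mul, restrict_split, Measure.add_apply,
    Measure.restrict_apply hA, Measure.restrict_apply hA]

lemma vol_Ioo01 : (volume : Measure ℝ) (Ioo (0 : ℝ) 1) = 1 := by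
  rw [Real.volume_Ioo]; norm_num

lemma vol_Ioom10 : (volume : Measure ℝ) (Ioo (-1 : ℝ) 0) = 1 := by
  rw [Real.volume_Ioo]; norm_num

section PartQ
variable (q : Kernel ℝ ℝ)

lemma piece_lintegral {μ0 : Measure ℝ} {a b : ℝ}
    (hq : ∀ x ∈ Ioo a b, q x = μ0) {A : Set ℝ} (hA : MeasurableSet A) :
    ∫⁻ x in Ioo a b, q x A ∂volume = μ0 A * volume (Ioo a b) := by
  rw [setLIntegral_congr_fun measurableSet_Ioo
      (fun x hx => by dsimp only; rw [hq x hx] :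
        EqOn (fun x => q x A) (fun _ => μ0 A) (Ioo a b)),
    setLIntegral_const]

theorem m1_erg
    (hq1 : ∀ x ∈ Ioo (-1 : ℝ) 0, q x = volume.restrict (Ioo (0 : ℝ) 1))
    (hq2 : ∀ x ∈ Ioo (0 : ℝ) 1, q x = volume.restrict (Ioo (-1 : ℝ) 0)) :
    KErgodicMeasure m1 (fun x => q x) := by
  constructor
  · intro A hA
    rw [m1_apply hA, m1, lintegral_smul_measure, restrict_split, lintegral_add_measure,
      piece_lintegral q hq1 hA, piece_lintegral q hq2 hA,
      Measure.restrict_apply hA, Measure.restrict_apply hA, vol_Ioo01, vol_Ioom10,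
      mul_one, mul_one]
    rw [add_comm]
    exact smul_eq_mul _ _
  · intro A hA hinv
    have hinv' : ∀ᵐ x ∂(volume.restrict (Ioo (-1 : ℝ) 1)), x ∈ A → q x A = 1 := by
      have h := hinv
      rw [KInvariantSet, m1, Measure.ae_ennreal_smul_measure_iff (by norm_num)] at h
      exact h
    have key : ∀ (c d : ℝ), Ioo c d ⊆ Ioo (-1 : ℝ) 1 → volume (A ∩ Ioo c d) ≠ 0 →
        ∃ x ∈ A ∩ Ioo c d, q x A = 1 := by
      intro c d hsub hne
      by_contra hcon
      push_neg at hcon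
      have hsubbad : A ∩ Ioo c d ⊆ {x | ¬(x ∈ A → q x A = 1)} := by
        intro x hx
        simp only [mem_setOf_eq, _root_.not_imp]
        exact ⟨hx.1, hcon x hx⟩
      have hnull : volume.restrict (Ioo (-1 : ℝ) 1) {x | ¬(x ∈ A → q x A = 1)} = 0 := by
        rw [ae_iff] at hinv'
        exact hinv'
      have h0 : volume.restrict (Ioo (-1 : ℝ) 1) (A ∩ Ioo c d) = 0 :=
        measure_mono_null hsubbad hnull
      rw [Measure.restrict_apply (hA.inter measurableSet_Ioo),
        Set.inter_eq_self_of_subset_left (fun x hx => hsub hx.2)] at h0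
      exact hne h0
    have step1 : volume (A ∩ Ioo (-1 : ℝ) 0) ≠ 0 → volume (A ∩ Ioo (0 : ℝ) 1) = 1 := by
      intro h0
      obtain ⟨x, hx, hqx⟩ := key (-1) 0 (fun y hy => ⟨hy.1, by linarith [hy.2]⟩) h0
      rwa [hq1 x hx.2, Measure.restrict_apply hA] at hqx
    have step2 : volume (A ∩ Ioo (0 : ℝ) 1) ≠ 0 → volume (A ∩ Ioo (-1 : ℝ) 0) = 1 := by
      intro h0
      obtain ⟨x, hx, hqx⟩ := key 0 1 (fun y hy => ⟨by linarith [hy.1], hy.2⟩) h0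
      rwa [hq2 x hx.2, Measure.restrict_apply hA] at hqx
    have main : volume (A ∩ Ioo (-1 : ℝ) 0) ≠ 0 ∨ volume (A ∩ Ioo (0 : ℝ) 1) ≠ 0 →
        volume (A ∩ Ioo (-1 : ℝ) 0) = 1 ∧ volume (A ∩ Ioo (0 : ℝ) 1) = 1 := by
      rintro (h | h)
      · have hβ1 := step1 h
        exact ⟨step2 (hβ1 ▸ one_ne_zero), hβ1⟩
      · have hα1 := step2 h
        exact ⟨hα1, step1 (hα1 ▸ one_ne_zero)⟩
    by_cases hα0 : volume (A ∩ Ioo (-1 : ℝ) 0) = 0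
    · by_cases hβ0 : volume (A ∩ Ioo (0 : ℝ) 1) = 0
      · left; rw [m1_apply hA, hα0, hβ0]; simp
      · right
        obtain ⟨h1, h2⟩ := main (Or.inr hβ0)
        rw [m1_apply hA, h1, h2, one_add_one_eq_two,
          ENNReal.inv_mul_cancel two_ne_zero ENNReal.ofNat_ne_top]
    · right
      obtain ⟨h1, h2⟩ := main (Or.inl hα0)
      rw [m1_apply hA, h1, h2, one_add_one_eq_two,
        ENNReal.inv_mul_cancel two_ne_zero ENNReal.ofNat_ne_top]
end PartQ

lemma integrableOn_of_bdd {f : ℝ → ℝ} (hf : BddCtsOn (Ioo (-1 : ℝ) 1) f)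
    {c d : ℝ} (hsub : Ioo c d ⊆ Ioo (-1 : ℝ) 1) :
    IntegrableOn f (Ioo c d) := by
  obtain ⟨hc, C, hC⟩ := hf
  refine Integrable.mono'
    (integrableOn_const measure_Ioo_lt_top.ne : IntegrableOn (fun _ : ℝ => C) _ _)
    ((hc.mono hsub).aestronglyMeasurable measurableSet_Ioo) ?_
  refine (ae_restrict_iff' measurableSet_Ioo).2
    (Filter.Eventually.of_forall fun x hx => ?_)
  rw [Real.norm_eq_abs]
  exact hC x (hsub hx)

section Rev
variable (q : Kernel ℝ ℝ)

-- main splitting computation for one side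
lemma rev_side (hq1 : ∀ x ∈ Ioo (-1 : ℝ) 0, q x = volume.restrict (Ioo (0 : ℝ) 1))
    (hq2 : ∀ x ∈ Ioo (0 : ℝ) 1, q x = volume.restrict (Ioo (-1 : ℝ) 0))
    {j k : ℝ → ℝ} (hj : BddCtsOn (Ioo (-1 : ℝ) 1) j) (hk : BddCtsOn (Ioo (-1 : ℝ) 1) k) :
    ∫ x, k x * ∫ y, j y ∂(q x) ∂m1 =
      (2 : ℝ)⁻¹ * ((∫ x in Ioo (-1 : ℝ) 0, k x) * (∫ y in Ioo (0 : ℝ) 1, j y)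
        + (∫ x in Ioo (0 : ℝ) 1, k x) * (∫ y in Ioo (-1 : ℝ) 0, j y)) := by
  have hsub1 : Ioo (-1 : ℝ) 0 ⊆ Ioo (-1 : ℝ) 1 := fun y hy => ⟨hy.1, by linarith [hy.2]⟩
  have hsub2 : Ioo (0 : ℝ) 1 ⊆ Ioo (-1 : ℝ) 1 := fun y hy => ⟨by linarith [hy.1], hy.2⟩
  rw [m1, integral_smul_measure, restrict_split, integral_add_measure]
  · congr 1
    · simp [ENNReal.toReal_inv]
    · congr 1
      · rw [setIntegral_congr_fun measurableSet_Ioo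
          (fun x hx => by dsimp only; rw [hq1 x hx] :
            EqOn (fun x => k x * ∫ y, j y ∂(q x))
              (fun x => k x * ∫ y in Ioo (0:ℝ) 1, j y) (Ioo (-1:ℝ) 0)),
          integral_mul_const]
      · rw [setIntegral_congr_fun measurableSet_Ioo
          (fun x hx => by dsimp only; rw [hq2 x hx] :
            EqOn (fun x => k x * ∫ y, j y ∂(q x))
              (fun x => k x * ∫ y in Ioo (-1:ℝ) 0, j y) (Ioo (0:ℝ) 1)),
          integral_mul_const]
  · exact IntegrableOn.congr_fun ((integrableOn_of_bdd hk hsub1).mul_const _)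
      (fun x hx => by rw [hq1 x hx]) measurableSet_Ioo
  · exact IntegrableOn.congr_fun ((integrableOn_of_bdd hk hsub2).mul_const _)
      (fun x hx => by rw [hq2 x hx]) measurableSet_Ioo

lemma rev_main (hq1 : ∀ x ∈ Ioo (-1 : ℝ) 0, q x = volume.restrict (Ioo (0 : ℝ) 1))
    (hq2 : ∀ x ∈ Ioo (0 : ℝ) 1, q x = volume.restrict (Ioo (-1 : ℝ) 0)) :
    Reversible1 q := by
  intro j k hj hk
  rw [rev_side q hq1 hq2 hj hk, rev_side q hq1 hq2 hk hj]
  ring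
end Rev

lemma Eset_pi2 : Eset (Real.pi / 2) = {p : ℝ × ℝ | p.1 ^ 2 + p.2 ^ 2 < 1} := by
  simp [Eset, Real.cos_pi_div_two]

def Qd (s t : ℝ) : Set (ℝ × ℝ) := {p | p.1 ^ 2 + p.2 ^ 2 < 1 ∧ 0 < s * p.1 ∧ 0 < t * p.2}

lemma measurableSet_Qd (s t : ℝ) : MeasurableSet (Qd s t) := by
  unfold Qd
  apply MeasurableSet.inter
  · exact measurableSet_lt
      ((measurable_fst.pow_const 2).add (measurable_snd.pow_const 2)) measurable_const
  apply MeasurableSet.inter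
  · exact measurableSet_lt measurable_const (measurable_fst.const_mul s)
  · exact measurableSet_lt measurable_const (measurable_snd.const_mul t)

lemma mp_flip {s : ℝ} (hs : s = 1 ∨ s = -1) :
    MeasurePreserving (fun x : ℝ => s * x) volume volume := by
  rcases hs with rfl | rfl
  · simp only [one_mul]; exact MeasurePreserving.id (volume : Measure ℝ)
  · simpa [neg_mul, one_mul] using
      (Measure.measurePreserving_neg (volume : Measure ℝ))

lemma vol_Qd (s t : ℝ) (hs : s = 1 ∨ s = -1) (ht : t = 1 ∨ t = -1) :
    volume (Qd s t) = volume (Qd 1 1) := by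
  have hφ : MeasurePreserving (Prod.map (fun x : ℝ => s * x) (fun x : ℝ => t * x))
      (volume : Measure (ℝ × ℝ)) volume := by
    rw [Measure.volume_eq_prod ℝ ℝ]
    exact (mp_flip hs).prod (mp_flip ht)
  have hpre : (Prod.map (fun x : ℝ => s * x) (fun x : ℝ => t * x)) ⁻¹' (Qd s t) = Qd 1 1 := by
    have hs2 : s * s = 1 := by rcases hs with rfl | rfl <;> norm_num
    have ht2 : t * t = 1 := by rcases ht with rfl | rfl <;> norm_num
    have hs1 : s ^ 2 = 1 := by rw [sq, hs2]
    have ht1 : t ^ 2 = 1 := by rw [sq, ht2]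
    ext p
    simp only [Qd, mem_preimage, Prod.map_fst, Prod.map_snd, Prod.map_apply, mem_setOf_eq, mul_pow, hs1, ht1, one_mul,
      ← mul_assoc, hs2, ht2]
  rw [← hpre, hφ.measure_preimage (measurableSet_Qd s t).nullMeasurableSet]

def Dset : Set (ℝ × ℝ) := {p | p.1 ^ 2 + p.2 ^ 2 < 1}

lemma measurableSet_Dset : MeasurableSet Dset :=
  measurableSet_lt ((measurable_fst.pow_const 2).add (measurable_snd.pow_const 2))
    measurable_const

lemma vol_Dset_lt_top : volume Dset < ⊤ := by
  have hsub : Dset ⊆ Ioo (-1 : ℝ) 1 ×ˢ Ioo (-1 : ℝ) 1 := by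
    rintro ⟨x, y⟩ h
    simp only [Dset, mem_setOf_eq] at h
    constructor <;> constructor <;> nlinarith [sq_nonneg x, sq_nonneg y]
  refine lt_of_le_of_lt (measure_mono hsub) ?_
  rw [Measure.volume_eq_prod ℝ ℝ, Measure.prod_prod,
    Real.volume_Ioo]
  exact ENNReal.mul_lt_top ENNReal.ofReal_lt_top ENNReal.ofReal_lt_top

lemma vol_Dset_ne_zero : volume Dset ≠ 0 := by
  have hsub : Ioo (0 : ℝ) (1/2) ×ˢ Ioo (0 : ℝ) (1/2) ⊆ Dset := by
    rintro ⟨x, y⟩ ⟨⟨h1, h2⟩, ⟨h3, h4⟩⟩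
    simp only [Dset, mem_setOf_eq]
    nlinarith
  intro h0
  have := measure_mono_null hsub h0
  rw [Measure.volume_eq_prod ℝ ℝ, Measure.prod_prod,
    Real.volume_Ioo] at this
  simp only [mul_eq_zero, ENNReal.ofReal_eq_zero] at this
  rcases this with h | h <;> norm_num at h

lemma disj_Qd1 {t t' : ℝ} : Disjoint (Qd 1 t) (Qd (-1) t') := by
  rw [Set.disjoint_left]
  rintro ⟨x, y⟩ ⟨_, h1, _⟩ ⟨_, h2, _⟩
  simp only [one_mul, neg_mul] at h1 h2
  linarith

lemma disj_Qd2 {s s' : ℝ} : Disjoint (Qd s 1) (Qd s' (-1)) := by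
  rw [Set.disjoint_left]
  rintro ⟨x, y⟩ ⟨_, _, h1⟩ ⟨_, _, h2⟩
  simp only [one_mul, neg_mul] at h1 h2
  linarith

lemma vol_Dset_eq : volume Dset = 4 * volume (Qd 1 1) := by
  set U : Set (ℝ × ℝ) := Qd 1 1 ∪ Qd 1 (-1) ∪ Qd (-1) 1 ∪ Qd (-1) (-1) with hU
  have hUvol : volume U = 4 * volume (Qd 1 1) := by
    rw [hU, measure_union (disjoint_union_left.2
        ⟨disjoint_union_left.2 ⟨disj_Qd1, disj_Qd1⟩, disj_Qd2⟩) (measurableSet_Qd _ _),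
      measure_union (disjoint_union_left.2 ⟨disj_Qd1, disj_Qd1⟩) (measurableSet_Qd _ _),
      measure_union disj_Qd2 (measurableSet_Qd _ _),
      vol_Qd 1 (-1) (Or.inl rfl) (Or.inr rfl), vol_Qd (-1) 1 (Or.inr rfl) (Or.inl rfl),
      vol_Qd (-1) (-1) (Or.inr rfl) (Or.inr rfl)]
    ring
  have hN : volume ({p : ℝ × ℝ | p.1 = 0} ∪ {p : ℝ × ℝ | p.2 = 0}) = 0 := by
    apply measure_union_null
    · have h : {p : ℝ × ℝ | p.1 = 0} = ({0} : Set ℝ) ×ˢ (univ : Set ℝ) := by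
        ext ⟨x, y⟩; simp [eq_comm]
      rw [h, Measure.volume_eq_prod ℝ ℝ, Measure.prod_prod]
      simp
    · have h : {p : ℝ × ℝ | p.2 = 0} = (univ : Set ℝ) ×ˢ ({0} : Set ℝ) := by
        ext ⟨x, y⟩; simp [eq_comm]
      rw [h, Measure.volume_eq_prod ℝ ℝ, Measure.prod_prod]
      simp
  apply le_antisymm
  · have hsub : Dset ⊆ ({p : ℝ × ℝ | p.1 = 0} ∪ {p : ℝ × ℝ | p.2 = 0}) ∪ U := by
      rintro ⟨x, y⟩ hxy
      rcases lt_trichotomy x 0 with hx | hx | hx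
      · rcases lt_trichotomy y 0 with hy | hy | hy
        · exact Or.inr (Or.inr ⟨hxy, by simp; linarith, by simp; linarith⟩)
        · exact Or.inl (Or.inr (by simp [hy]))
        · exact Or.inr (Or.inl (Or.inr ⟨hxy, by simp; linarith, by simp; linarith⟩))
      · exact Or.inl (Or.inl (by simp [hx]))
      · rcases lt_trichotomy y 0 with hy | hy | hy
        · exact Or.inr (Or.inl (Or.inl (Or.inr ⟨hxy, by simp; linarith, by simp; linarith⟩)))
        · exact Or.inl (Or.inr (by simp [hy]))
        · exact Or.inr (Or.inl (Or.inl (Or.inl ⟨hxy, by simp; linarith, by simp; linarith⟩)))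
    calc volume Dset ≤ volume (({p : ℝ × ℝ | p.1 = 0} ∪ {p : ℝ × ℝ | p.2 = 0}) ∪ U) :=
          measure_mono hsub
      _ ≤ volume ({p : ℝ × ℝ | p.1 = 0} ∪ {p : ℝ × ℝ | p.2 = 0}) + volume U :=
          measure_union_le _ _
      _ = 4 * volume (Qd 1 1) := by rw [hN, hUvol, zero_add]
  · rw [← hUvol]
    apply measure_mono
    rw [hU]
    rintro p (((h | h) | h) | h) <;> exact h.1

lemma Eset_pi2' : Eset (Real.pi / 2) = Dset := Eset_pi2

def Sq (s t : ℝ) : Set (ℝ × ℝ × ℝ) :=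
  {w : ℝ × ℝ × ℝ | (w.1, w.2.1) ∈ Eset (Real.pi / 2) ∧
    0 < s * w.1 ∧ 0 < t * w.2.1 ∧ (w.2.2 = 1 ∨ w.2.2 = -1)}

lemma measurableSet_Sq (s t : ℝ) : MeasurableSet (Sq s t) := by
  have h1 : MeasurableSet {w : ℝ × ℝ × ℝ | (w.1, w.2.1) ∈ Eset (Real.pi / 2)} := by
    rw [Eset_pi2']
    exact (measurable_fst.prodMk (measurable_fst.comp measurable_snd)) measurableSet_Dset
  have h2 : MeasurableSet {w : ℝ × ℝ × ℝ | 0 < s * w.1} :=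
    measurableSet_lt measurable_const (measurable_fst.const_mul s)
  have h3 : MeasurableSet {w : ℝ × ℝ × ℝ | 0 < t * w.2.1} :=
    measurableSet_lt measurable_const ((measurable_fst.comp measurable_snd).const_mul t)
  have h4 : MeasurableSet {w : ℝ × ℝ × ℝ | w.2.2 = 1 ∨ w.2.2 = -1} := by
    have : {w : ℝ × ℝ × ℝ | w.2.2 = 1 ∨ w.2.2 = -1} =
        (fun w : ℝ × ℝ × ℝ => w.2.2) ⁻¹' ({1, -1} : Set ℝ) := by
      ext w; simp [mem_insert_iff]
    rw [this]
    exact (measurable_snd.comp measurable_snd)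
      ((measurableSet_singleton (-1 : ℝ)).insert 1)
  exact (h1.inter (h2.inter (h3.inter h4)))

lemma coin_pm : ((2 : ℝ≥0∞)⁻¹ • (Measure.dirac (1 : ℝ) + Measure.dirac (-1 : ℝ)))
    ({1, -1} : Set ℝ) = 1 := by
  have hm : MeasurableSet ({1, -1} : Set ℝ) := (measurableSet_singleton (-1 : ℝ)).insert 1
  rw [Measure.smul_apply, Measure.add_apply, Measure.dirac_apply' _ hm,
    Measure.dirac_apply' _ hm]
  simp [indicator, mem_insert_iff]
  rw [one_add_one_eq_two, ENNReal.inv_mul_cancel two_ne_zero ENNReal.ofNat_ne_top]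

lemma m2_Sq (s t : ℝ) : m2 (Real.pi / 2) (Sq s t) = (volume Dset)⁻¹ * volume (Qd s t) := by
  have hmap : Measurable (fun p : (ℝ × ℝ) × ℝ => (p.1.1, p.1.2, p.2)) :=
    (measurable_fst.fst).prodMk ((measurable_fst.snd).prodMk measurable_snd)
  rw [m2, Measure.map_apply hmap (measurableSet_Sq s t)]
  have hpre : (fun p : (ℝ × ℝ) × ℝ => (p.1.1, p.1.2, p.2)) ⁻¹' (Sq s t)
      = (Qd s t) ×ˢ ({1, -1} : Set ℝ) := by
    ext ⟨⟨u, v⟩, x⟩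
    simp only [Sq, Qd, Eset_pi2', Dset, mem_preimage, mem_setOf_eq, mem_prod, mem_insert_iff,
      mem_singleton_iff]
    tauto
  rw [hpre, Measure.prod_prod, coin_pm, mul_one, Measure.smul_apply,
    Measure.restrict_apply (measurableSet_Qd s t), Eset_pi2',
    Set.inter_eq_self_of_subset_left (fun p hp => hp.1), smul_eq_mul]

lemma m2_Sq_quarter (s t : ℝ) (hs : s = 1 ∨ s = -1) (ht : t = 1 ∨ t = -1) :
    m2 (Real.pi / 2) (Sq s t) = 1 / 4 := by
  have hct : volume (Qd 1 1) ≠ ⊤ := by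
    intro h
    have hlt := vol_Dset_lt_top
    rw [vol_Dset_eq, h] at hlt
    simp [ENNReal.mul_top] at hlt
  have hc0 : volume (Qd 1 1) ≠ 0 := by
    intro h
    exact vol_Dset_ne_zero (by rw [vol_Dset_eq, h, mul_zero])
  rw [m2_Sq, vol_Qd s t hs ht, vol_Dset_eq,
    ENNReal.mul_inv (Or.inl (by norm_num)) (Or.inl (by norm_num)),
    mul_assoc, ENNReal.inv_mul_cancel hc0 hct, mul_one, one_div]

lemma ellMap_pi2 (u x : ℝ) : ellMap (Real.pi / 2) u x = x * Real.sqrt (1 - u ^ 2) := by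
  simp [ellMap, Real.cos_pi_div_two, Real.sin_pi_div_two]

lemma ellInv_pi2 (u y : ℝ) : ellInv (Real.pi / 2) u y = y / Real.sqrt (1 - u ^ 2) := by
  simp [ellInv, Real.cos_pi_div_two, Real.sin_pi_div_two]

lemma map_restrict_eq_one {f : ℝ → ℝ × ℝ × ℝ} (hf : Measurable f) {a b : ℝ}
    (hab : volume (Ioo a b) = 1) {S : Set (ℝ × ℝ × ℝ)} (hS : MeasurableSet S)
    (hsub : Ioo a b ⊆ f ⁻¹' S) :
    (Measure.map f (volume.restrict (Ioo a b))) S = 1 := by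
  rw [Measure.map_apply hf hS]
  have h1 : volume.restrict (Ioo a b) (Ioo a b) = 1 := by
    rw [Measure.restrict_apply measurableSet_Ioo, Set.inter_self]; exact hab
  apply le_antisymm
  · calc volume.restrict (Ioo a b) (f ⁻¹' S) ≤ volume.restrict (Ioo a b) univ :=
        measure_mono (subset_univ _)
      _ = 1 := by rw [Measure.restrict_apply_univ]; exact hab
  · calc (1 : ℝ≥0∞) = volume.restrict (Ioo a b) (Ioo a b) := h1.symm
      _ ≤ _ := measure_mono hsub

lemma measurable_f1 (v c : ℝ) : Measurable fun x : ℝ => (ellMap (Real.pi / 2) v x, v, c) := by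
  unfold ellMap
  exact ((measurable_id.mul_const _).const_add _).prodMk measurable_const

lemma measurable_f2 (u c : ℝ) : Measurable fun x : ℝ => (u, ellMap (Real.pi / 2) u x, c) := by
  unfold ellMap
  exact measurable_const.prodMk
    (((measurable_id.mul_const _).const_add _).prodMk measurable_const)

lemma Sq_invariant (q : Kernel ℝ ℝ)
    (hq1 : ∀ x ∈ Ioo (-1 : ℝ) 0, q x = volume.restrict (Ioo (0 : ℝ) 1))
    (hq2 : ∀ x ∈ Ioo (0 : ℝ) 1, q x = volume.restrict (Ioo (-1 : ℝ) 0))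
    (s t : ℝ) (hs : s = 1 ∨ s = -1) (ht : t = 1 ∨ t = -1) :
    ∀ w ∈ Sq s t, Qfun (Real.pi / 2) q w (Sq s t) = 1 := by
  rintro ⟨u, v, σ⟩ ⟨hE, hsu, htv, hσ⟩
  dsimp only at hE hsu htv hσ
  rw [Eset_pi2'] at hE
  simp only [Dset, mem_setOf_eq] at hE
  have hu0 : u ≠ 0 := by
    intro h; rw [h, mul_zero] at hsu; exact lt_irrefl 0 hsu
  have hv0 : v ≠ 0 := by
    intro h; rw [h, mul_zero] at htv; exact lt_irrefl 0 htv
  have hv2 : (0:ℝ) < 1 - v ^ 2 := by nlinarith [sq_nonneg u]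
  have hu2 : (0:ℝ) < 1 - u ^ 2 := by nlinarith [sq_nonneg v]
  have hsv : (0:ℝ) < Real.sqrt (1 - v ^ 2) := Real.sqrt_pos.2 hv2
  have hsu' : (0:ℝ) < Real.sqrt (1 - u ^ 2) := Real.sqrt_pos.2 hu2
  have hsvsq : Real.sqrt (1 - v ^ 2) ^ 2 = 1 - v ^ 2 := Real.sq_sqrt hv2.le
  have hsusq : Real.sqrt (1 - u ^ 2) ^ 2 = 1 - u ^ 2 := Real.sq_sqrt hu2.le
  rcases hσ with rfl | rfl
  · -- σ = 1 : second branch, moves v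
    have hbr : Qfun (Real.pi / 2) q (u, v, 1) =
        Measure.map (fun x => (u, ellMap (Real.pi / 2) u x, (-1 : ℝ)))
          (q (-(v / Real.sqrt (1 - u ^ 2)))) := by
      simp only [Qfun]
      rw [if_neg (by norm_num : ¬((u, v, (1:ℝ)).2.2 = -1))]
      rw [show ellInv (Real.pi / 2) (u, v, (1:ℝ)).1 (u, v, (1:ℝ)).2.1
        = v / Real.sqrt (1 - u ^ 2) from ellInv_pi2 u v]
    rw [hbr]
    rcases ht with rfl | rfl
    · -- t = 1 : v > 0, x₀ ∈ (-1,0), q x₀ = Leb (0,1)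
      have hv : 0 < v := by linarith [htv]
      have hx0 : -(v / Real.sqrt (1 - u ^ 2)) ∈ Ioo (-1 : ℝ) 0 := by
        constructor
        · rw [neg_lt, neg_neg, div_lt_one hsu']
          exact Real.lt_sqrt_of_sq_lt (by nlinarith)
        · simp only [neg_neg, Left.neg_neg_iff]
          exact div_pos hv hsu'
      rw [hq1 _ hx0]
      refine map_restrict_eq_one (measurable_f2 u (-1)) (by rw [Real.volume_Ioo]; norm_num)
        (measurableSet_Sq s 1) ?_
      rintro x ⟨hx1, hx2⟩
      refine ⟨?_, hsu, ?_, Or.inr rfl⟩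
      · rw [Eset_pi2']
        show u ^ 2 + ellMap (Real.pi / 2) u x ^ 2 < 1
        rw [ellMap_pi2, mul_pow, hsusq]
        have hxsq : x ^ 2 < 1 := by nlinarith
        nlinarith [mul_lt_mul_of_pos_right hxsq hu2]
      · show 0 < 1 * ellMap (Real.pi / 2) u x
        rw [ellMap_pi2, one_mul]
        exact mul_pos hx1 hsu'
    · -- t = -1 : v < 0, x₀ ∈ (0,1), q x₀ = Leb (-1,0)
      have hv : v < 0 := by nlinarith [htv]
      have hx0 : -(v / Real.sqrt (1 - u ^ 2)) ∈ Ioo (0 : ℝ) 1 := by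
        constructor
        · rw [neg_pos]
          exact div_neg_of_neg_of_pos hv hsu'
        · rw [← neg_div, div_lt_one hsu']
          exact Real.lt_sqrt_of_sq_lt (by nlinarith)
      rw [hq2 _ hx0]
      refine map_restrict_eq_one (measurable_f2 u (-1)) (by rw [Real.volume_Ioo]; norm_num)
        (measurableSet_Sq s (-1)) ?_
      rintro x ⟨hx1, hx2⟩
      refine ⟨?_, hsu, ?_, Or.inr rfl⟩
      · rw [Eset_pi2']
        show u ^ 2 + ellMap (Real.pi / 2) u x ^ 2 < 1
        rw [ellMap_pi2, mul_pow, hsusq]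
        have hxsq : x ^ 2 < 1 := by nlinarith
        nlinarith [mul_lt_mul_of_pos_right hxsq hu2]
      · show 0 < -1 * ellMap (Real.pi / 2) u x
        rw [ellMap_pi2]
        nlinarith [mul_pos (neg_pos.2 hx2) hsu']
  · -- σ = -1 : first branch, moves u
    have hbr : Qfun (Real.pi / 2) q (u, v, -1) =
        Measure.map (fun x => (ellMap (Real.pi / 2) v x, v, (1 : ℝ)))
          (q (-(u / Real.sqrt (1 - v ^ 2)))) := by
      simp only [Qfun]
      rw [if_pos trivial]
      rw [show ellInv (Real.pi / 2) (u, v, (-1:ℝ)).2.1 (u, v, (-1:ℝ)).1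
        = u / Real.sqrt (1 - v ^ 2) from ellInv_pi2 v u]
    rw [hbr]
    rcases hs with rfl | rfl
    · have hu : 0 < u := by linarith [hsu]
      have hx0 : -(u / Real.sqrt (1 - v ^ 2)) ∈ Ioo (-1 : ℝ) 0 := by
        constructor
        · rw [neg_lt, neg_neg, div_lt_one hsv]
          exact Real.lt_sqrt_of_sq_lt (by nlinarith)
        · simp only [neg_neg, Left.neg_neg_iff]
          exact div_pos hu hsv
      rw [hq1 _ hx0]
      refine map_restrict_eq_one (measurable_f1 v 1) (by rw [Real.volume_Ioo]; norm_num)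
        (measurableSet_Sq 1 t) ?_
      rintro x ⟨hx1, hx2⟩
      refine ⟨?_, ?_, htv, Or.inl rfl⟩
      · rw [Eset_pi2']
        show ellMap (Real.pi / 2) v x ^ 2 + v ^ 2 < 1
        rw [ellMap_pi2, mul_pow, hsvsq]
        have hxsq : x ^ 2 < 1 := by nlinarith
        nlinarith [mul_lt_mul_of_pos_right hxsq hv2]
      · show 0 < 1 * ellMap (Real.pi / 2) v x
        rw [ellMap_pi2, one_mul]
        exact mul_pos hx1 hsv
    · have hu : u < 0 := by nlinarith [hsu]
      have hx0 : -(u / Real.sqrt (1 - v ^ 2)) ∈ Ioo (0 : ℝ) 1 := by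
        constructor
        · rw [neg_pos]
          exact div_neg_of_neg_of_pos hu hsv
        · rw [← neg_div, div_lt_one hsv]
          exact Real.lt_sqrt_of_sq_lt (by nlinarith)
      rw [hq2 _ hx0]
      refine map_restrict_eq_one (measurable_f1 v 1) (by rw [Real.volume_Ioo]; norm_num)
        (measurableSet_Sq (-1) t) ?_
      rintro x ⟨hx1, hx2⟩
      refine ⟨?_, ?_, htv, Or.inl rfl⟩
      · rw [Eset_pi2']
        show ellMap (Real.pi / 2) v x ^ 2 + v ^ 2 < 1
        rw [ellMap_pi2, mul_pow, hsvsq]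
        have hxsq : x ^ 2 < 1 := by nlinarith
        nlinarith [mul_lt_mul_of_pos_right hxsq hv2]
      · show 0 < -1 * ellMap (Real.pi / 2) v x
        rw [ellMap_pi2]
        nlinarith [mul_pos (neg_pos.2 hx2) hsv]


end Aux

/-- the counterexample at `γ = π/2` (the unit disk): with `q` as described,
`m¹` is reversible and ergodic for `q`, yet `m²` is not ergodic for `Q`; each quadrant
piece of `E*` is `(m²,Q)`-invariant of measure `1/4`. -/
theorem counterexample_right_angle
    (q : Kernel ℝ ℝ) (hq : IsMarkovOnInterval q)
    (hq1 : ∀ x ∈ Ioo (-1 : ℝ) 0, q x = volume.restrict (Ioo (0 : ℝ) 1))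
    (hq2 : ∀ x ∈ Ioo (0 : ℝ) 1, q x = volume.restrict (Ioo (-1 : ℝ) 0))
    (hq0 : q 0 = m1) :
    Reversible1 q ∧
    KErgodicMeasure m1 (fun x => q x) ∧
    ¬ KErgodicMeasure (m2 (Real.pi / 2)) (Qfun (Real.pi / 2) q) ∧
    ∀ s t : ℝ, (s = 1 ∨ s = -1) → (t = 1 ∨ t = -1) →
      KInvariantSet (m2 (Real.pi / 2)) (Qfun (Real.pi / 2) q)
        {w : ℝ × ℝ × ℝ | (w.1, w.2.1) ∈ Eset (Real.pi / 2) ∧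
          0 < s * w.1 ∧ 0 < t * w.2.1 ∧ (w.2.2 = 1 ∨ w.2.2 = -1)} ∧
      m2 (Real.pi / 2) {w : ℝ × ℝ × ℝ | (w.1, w.2.1) ∈ Eset (Real.pi / 2) ∧
          0 < s * w.1 ∧ 0 < t * w.2.1 ∧ (w.2.2 = 1 ∨ w.2.2 = -1)} = 1 / 4 := by
  refine ⟨rev_main q hq1 hq2, m1_erg q hq1 hq2, ?_, ?_⟩
  · rintro ⟨-, herg⟩
    have h := herg (Sq 1 1) (measurableSet_Sq 1 1)
      (Filter.Eventually.of_forall (Sq_invariant q hq1 hq2 1 1 (Or.inl rfl) (Or.inl rfl)))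
    rw [m2_Sq_quarter 1 1 (Or.inl rfl) (Or.inl rfl)] at h
    rcases h with h | h
    · rw [ENNReal.div_eq_zero_iff] at h
      rcases h with h | h <;> norm_num at h
    · rw [ENNReal.div_eq_one_iff (by norm_num) (by norm_num)] at h
      norm_num at h
  · intro s t hs ht
    exact ⟨Filter.Eventually.of_forall (Sq_invariant q hq1 hq2 s t hs ht),
      m2_Sq_quarter s t hs ht⟩
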